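/- Given the second-order Taylor bound ‖p_ref(τ+h) − p_ref(τ) − h·p_ref'(τ) − (h²/2)·p_ref''(τ)‖ ≤ M·|h|³ for all |h| ≤ h₀, the one-step required acceleration from an on-path state with scaling α (so h = α·t_s) satisfies |u_req − α²·‖p_ref''(τ)‖| ≤ 2M·α³·t_s, for 0 < α·t_s ≤ h₀. -/

import Mathlib

/-- Given a cubic Taylor-remainder bound, the one-step required acceleration
    from an on-path state with scaling `α` is within `2Mα³t_s` of
    `α²‖p_ref''(τ)‖`. -/
theorem stmt17 (t_s h₀ M τ α : ℝ) (ht : 0 < t_s) (hh₀ : 0 < h₀) (hM : 0 ≤ M)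
    (pref : ℝ → EuclideanSpace ℝ (Fin 2))
    (p' p'' : EuclideanSpace ℝ (Fin 2))
    (htaylor : ∀ h : ℝ, |h| ≤ h₀ →
      ‖pref (τ + h) - pref τ - h • p' - (h ^ 2 / 2) • p''‖ ≤ M * |h| ^ 3)
    (hα : 0 < α * t_s) (hα2 : α * t_s ≤ h₀) :
    let r := pref (τ + α * t_s) - pref τ - t_s • (α • p')
    |(2 / t_s ^ 2) * ‖r‖ - α ^ 2 * ‖p''‖| ≤ 2 * M * α ^ 3 * t_s := by
  intro r
  have hαpos : 0 < α := by nlinarith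
  have habs : |α * t_s| = α * t_s := abs_of_pos hα
  have h1 := htaylor (α * t_s) (by rw [habs]; exact hα2)
  rw [habs] at h1
  have hrw : r - ((α * t_s) ^ 2 / 2) • p''
      = pref (τ + α * t_s) - pref τ - (α * t_s) • p' - ((α * t_s) ^ 2 / 2) • p'' := by
    simp only [r, smul_smul]
    ring_nf
  have key : |‖r‖ - ‖((α * t_s) ^ 2 / 2) • p''‖| ≤ M * (α * t_s) ^ 3 := by
    calc |‖r‖ - ‖((α * t_s) ^ 2 / 2) • p''‖| ≤ ‖r - ((α * t_s) ^ 2 / 2) • p''‖ :=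
          abs_norm_sub_norm_le _ _
      _ ≤ M * (α * t_s) ^ 3 := by rw [hrw]; exact h1
  have hnorm : ‖((α * t_s) ^ 2 / 2) • p''‖ = (α * t_s) ^ 2 / 2 * ‖p''‖ := by
    rw [norm_smul, Real.norm_eq_abs, abs_of_nonneg (by positivity)]
  rw [hnorm] at key
  rw [abs_le] at key ⊢
  have hts2 : (0:ℝ) < t_s ^ 2 := by positivity
  constructor
  · have := key.1
    have h2 : (2 / t_s ^ 2) * (‖r‖ - (α * t_s) ^ 2 / 2 * ‖p''‖) ≥
        (2 / t_s ^ 2) * (-(M * (α * t_s) ^ 3)) := by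
      apply mul_le_mul_of_nonneg_left this (by positivity)
    rw [mul_sub] at h2
    have e1 : (2 / t_s ^ 2) * ((α * t_s) ^ 2 / 2 * ‖p''‖) = α ^ 2 * ‖p''‖ := by
      field_simp
    have e2 : (2 / t_s ^ 2) * (-(M * (α * t_s) ^ 3)) = -(2 * M * α ^ 3 * t_s) := by
      field_simp
    rw [e1, e2] at h2
    linarith
  · have := key.2
    have h2 : (2 / t_s ^ 2) * (‖r‖ - (α * t_s) ^ 2 / 2 * ‖p''‖) ≤
        (2 / t_s ^ 2) * (M * (α * t_s) ^ 3) := by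
      apply mul_le_mul_of_nonneg_left this (by positivity)
    rw [mul_sub] at h2
    have e1 : (2 / t_s ^ 2) * ((α * t_s) ^ 2 / 2 * ‖p''‖) = α ^ 2 * ‖p''‖ := by
      field_simp
    have e2 : (2 / t_s ^ 2) * (M * (α * t_s) ^ 3) = 2 * M * α ^ 3 * t_s := by
      field_simp
    rw [e1, e2] at h2
    linarith
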